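/- arXiv:2410.23970 — 2 statements merged into one kernel-verified Lean document; each statement's English description precedes it below -/
import Mathlib

section
/- Let n, b, m be positive integers, let x be a real n×b matrix, let G be a real m×b matrix, let η be a real number, and let λ > 0. Define the TrAct objective F(ΔW) = ‖−η·b·G − ΔW·x‖_F² + λ·b·‖ΔW‖_F² for ΔW ∈ ℝ^{m×n} (with b cast to a real scalar). Then ΔW* = −η · G · xᵀ · (x·xᵀ/b + λ·Iₙ)⁻¹ is a global minimizer of F, i.e., F(ΔW*) ≤ F(ΔW) for every ΔW ∈ ℝ^{m×n}. -/
open Matrix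

/-- Squared Frobenius norm of a real matrix. -/
noncomputable def frobSq {k l : ℕ} (A : Matrix (Fin k) (Fin l) ℝ) : ℝ :=
  ∑ i, ∑ j, (A i j) ^ 2

/-- Frobenius inner product. -/
noncomputable def frobIp {k l : ℕ} (A B : Matrix (Fin k) (Fin l) ℝ) : ℝ :=
  ∑ i, ∑ j, A i j * B i j

lemma frobSq_nonneg {k l : ℕ} (A : Matrix (Fin k) (Fin l) ℝ) : 0 ≤ frobSq A :=
  Finset.sum_nonneg fun _ _ => Finset.sum_nonneg fun _ _ => sq_nonneg _

lemma frobSq_sub {k l : ℕ} (P Q : Matrix (Fin k) (Fin l) ℝ) :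
    frobSq (P - Q) = frobSq P - 2 * frobIp P Q + frobSq Q := by
  simp only [frobSq, frobIp, Matrix.sub_apply, Finset.mul_sum, ← Finset.sum_sub_distrib,
    ← Finset.sum_add_distrib]
  exact Finset.sum_congr rfl fun i _ => Finset.sum_congr rfl fun j _ => by ring

lemma frobSq_add {k l : ℕ} (P Q : Matrix (Fin k) (Fin l) ℝ) :
    frobSq (P + Q) = frobSq P + 2 * frobIp P Q + frobSq Q := by
  simp only [frobSq, frobIp, Matrix.add_apply, Finset.mul_sum,
    ← Finset.sum_add_distrib]
  exact Finset.sum_congr rfl fun i _ => Finset.sum_congr rfl fun j _ => by ring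

lemma frobIp_mul_right {p q r : ℕ} (B : Matrix (Fin p) (Fin r) ℝ)
    (A : Matrix (Fin p) (Fin q) ℝ) (x : Matrix (Fin q) (Fin r) ℝ) :
    frobIp B (A * x) = frobIp (B * xᵀ) A := by
  unfold frobIp
  refine Finset.sum_congr rfl fun i _ => ?_
  simp only [Matrix.mul_apply, Matrix.transpose_apply, Finset.mul_sum, Finset.sum_mul]
  rw [Finset.sum_comm]
  exact Finset.sum_congr rfl fun k _ => Finset.sum_congr rfl fun j _ => by ring

lemma posSemidef_smul' {k : ℕ} {A : Matrix (Fin k) (Fin k) ℝ} (hA : A.PosSemidef)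
    {c : ℝ} (hc : 0 ≤ c) : (c • A).PosSemidef := by
  refine ⟨?_, fun v => ?_⟩
  · show (c • A)ᴴ = c • A
    rw [conjTranspose_smul, hA.1]
    simp
  · have h := mul_nonneg hc (hA.2 v)
    simp only [Finsupp.mul_sum] at h
    refine le_of_le_of_eq h ?_
    simp only [Matrix.smul_apply, smul_eq_mul]
    congr 1; ext i xi; congr 1; ext j xj; ring

/-- The TrAct objective `F(ΔW) = ‖−η·b·G − ΔW·x‖_F² + λ·b·‖ΔW‖_F²` is globally minimized by
`ΔW* = −η · G · xᵀ · (x·xᵀ/b + λ·Iₙ)⁻¹`. -/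
theorem tract_global_min
    (n b m : ℕ) (hn : 0 < n) (hb : 0 < b) (hm : 0 < m)
    (x : Matrix (Fin n) (Fin b) ℝ) (G : Matrix (Fin m) (Fin b) ℝ)
    (η lam : ℝ) (hlam : 0 < lam)
    (F : Matrix (Fin m) (Fin n) ℝ → ℝ)
    (hF : ∀ ΔW, F ΔW = frobSq ((-(η * (b : ℝ))) • G - ΔW * x) + lam * (b : ℝ) * frobSq ΔW)
    (ΔWstar : Matrix (Fin m) (Fin n) ℝ)
    (hΔWstar : ΔWstar =
      (-η) • (G * xᵀ * ((b : ℝ)⁻¹ • (x * xᵀ) + lam • (1 : Matrix (Fin n) (Fin n) ℝ))⁻¹)) :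
    ∀ ΔW : Matrix (Fin m) (Fin n) ℝ, F ΔWstar ≤ F ΔW := by
  intro ΔW
  have hbR : (0 : ℝ) < (b : ℝ) := by exact_mod_cast hb
  set C : Matrix (Fin m) (Fin b) ℝ := (-(η * (b : ℝ))) • G with hC
  set S : Matrix (Fin n) (Fin n) ℝ :=
    (b : ℝ)⁻¹ • (x * xᵀ) + lam • (1 : Matrix (Fin n) (Fin n) ℝ) with hS
  -- S is positive definite
  have hSpd : S.PosDef := by
    have h1 : ((b : ℝ)⁻¹ • (x * xᵀ)).PosSemidef := by
      have : (x * xᴴ).PosSemidef := Matrix.posSemidef_self_mul_conjTranspose x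
      rw [Matrix.conjTranspose_eq_transpose_of_trivial] at this
      exact posSemidef_smul' this (by positivity)
    have h2 : (lam • (1 : Matrix (Fin n) (Fin n) ℝ)).PosDef := by
      have h3 : lam • (1 : Matrix (Fin n) (Fin n) ℝ) = Matrix.diagonal (fun _ => lam) := by
        ext i j
        by_cases h : i = j <;> simp [Matrix.one_apply, Matrix.diagonal, h]
      rw [h3]
      exact Matrix.PosDef.diagonal fun _ => hlam
    exact Matrix.PosDef.posSemidef_add h1 h2
  have hinv : S⁻¹ * S = 1 := Matrix.nonsing_inv_mul S (Matrix.isUnit_iff_isUnit_det S |>.1 hSpd.isUnit)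
  have hstar : ΔWstar * S = (-η) • (G * xᵀ) := by
    rw [hΔWstar, Matrix.smul_mul, Matrix.mul_assoc, hinv, Matrix.mul_one]
  -- key normal equation
  have hkey : C * xᵀ - (ΔWstar * (x * xᵀ) + (lam * (b : ℝ)) • ΔWstar) = 0 := by
    have h1 : ΔWstar * (x * xᵀ) + (lam * (b : ℝ)) • ΔWstar = (b : ℝ) • (ΔWstar * S) := by
      rw [hS, Matrix.mul_add, Matrix.mul_smul, Matrix.mul_smul, Matrix.mul_one,
        smul_add, smul_smul, smul_smul, mul_inv_cancel₀ hbR.ne', one_smul, mul_comm]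
    rw [h1, hstar, hC, Matrix.smul_mul, smul_smul]
    rw [sub_eq_zero]
    congr 1
    ring
  set D : Matrix (Fin m) (Fin n) ℝ := ΔW - ΔWstar with hD
  have hΔW : ΔW = ΔWstar + D := by rw [hD]; abel
  have hcross : frobIp (C - ΔWstar * x) (D * x) = lam * (b : ℝ) * frobIp ΔWstar D := by
    rw [frobIp_mul_right]
    have hkey' : C * xᵀ = ΔWstar * (x * xᵀ) + (lam * (b : ℝ)) • ΔWstar := sub_eq_zero.1 hkey
    have h2 : (C - ΔWstar * x) * xᵀ = (lam * (b : ℝ)) • ΔWstar := by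
      rw [Matrix.sub_mul, Matrix.mul_assoc, hkey']
      abel
    rw [h2]
    simp only [frobIp, Matrix.smul_apply, smul_eq_mul, Finset.mul_sum]
    exact Finset.sum_congr rfl fun i _ => Finset.sum_congr rfl fun j _ => by ring
  have expand : F ΔW = F ΔWstar + (frobSq (D * x) + lam * (b : ℝ) * frobSq D) := by
    rw [hF, hF, hΔW]
    have e1 : C - (ΔWstar + D) * x = (C - ΔWstar * x) - D * x := by
      rw [Matrix.add_mul]; abel
    rw [e1, frobSq_sub, frobSq_add (P := ΔWstar) (Q := D), hcross]
    ring
  rw [expand]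
  have : 0 ≤ frobSq (D * x) + lam * (b : ℝ) * frobSq D := by
    have := frobSq_nonneg (D * x)
    have h2 := frobSq_nonneg D
    positivity
  linarith
end

section
/- Let n, b, m be positive integers, let x be a real n×b matrix, let G be a real m×b matrix, let η be a real number, and let λ > 0. Define F(ΔW) = ‖−η·b·G − ΔW·x‖_F² + λ·b·‖ΔW‖_F² for ΔW ∈ ℝ^{m×n}. If ΔW ∈ ℝ^{m×n} satisfies F(ΔW) ≤ F(V) for every V ∈ ℝ^{m×n}, then ΔW = −η · G · xᵀ · (x·xᵀ/b + λ·Iₙ)⁻¹; in other words, the global minimizer of F is unique and equals the TrAct update. -/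
open Matrix

lemma coeff_zero {c d : ℝ} (hd : 0 ≤ d) (h : ∀ t : ℝ, 0 ≤ c * t + d * t ^ 2) : c = 0 := by
  have h1 := h (-c / (d + 1))
  have hd1 : 0 < d + 1 := by linarith
  have h2 : c * (-c / (d + 1)) + d * (-c / (d + 1)) ^ 2 = -c ^ 2 / (d + 1) ^ 2 := by
    field_simp
    ring
  rw [h2] at h1
  have h3 : 0 < (d + 1) ^ 2 := by positivity
  rw [le_div_iff₀ h3] at h1
  have hc2 : c ^ 2 = 0 := le_antisymm (by linarith) (sq_nonneg c)
  exact pow_eq_zero_iff (by norm_num) |>.mp hc2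

lemma frobSq_sub_smul {k l : ℕ} (P Q : Matrix (Fin k) (Fin l) ℝ) (t : ℝ) :
    frobSq (P - t • Q) =
      frobSq P - 2 * t * (∑ i, ∑ j, P i j * Q i j) + t ^ 2 * frobSq Q := by
  unfold frobSq
  have h : ∀ i j, (P - t • Q) i j ^ 2
      = P i j ^ 2 - 2 * t * (P i j * Q i j) + t ^ 2 * Q i j ^ 2 := by
    intro i j
    simp only [Matrix.sub_apply, Matrix.smul_apply, smul_eq_mul]
    ring
  simp_rw [h, Finset.sum_add_distrib, Finset.sum_sub_distrib, ← Finset.mul_sum]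

/-- `frobSq (P + t • Q)` expansion. -/
lemma frobSq_add_smul {k l : ℕ} (P Q : Matrix (Fin k) (Fin l) ℝ) (t : ℝ) :
    frobSq (P + t • Q) =
      frobSq P + 2 * t * (∑ i, ∑ j, P i j * Q i j) + t ^ 2 * frobSq Q := by
  have := frobSq_sub_smul P Q (-t)
  rw [show P - (-t) • Q = P + t • Q by module] at this
  rw [this]; ring

lemma smul_posSemidef {k : ℕ} {M : Matrix (Fin k) (Fin k) ℝ}
    (h : M.PosSemidef) {c : ℝ} (hc : 0 ≤ c) : (c • M).PosSemidef := by
  refine ⟨?_, fun v => ?_⟩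
  · have h1 := h.1
    unfold Matrix.IsHermitian at *
    rw [conjTranspose_smul, h1, star_trivial]
  · simpa [Finsupp.mul_sum, mul_assoc, mul_comm, mul_left_comm] using mul_nonneg hc (h.2 v)

lemma smul_posDef {k : ℕ} {M : Matrix (Fin k) (Fin k) ℝ}
    (h : M.PosDef) {c : ℝ} (hc : 0 < c) : (c • M).PosDef := by
  refine ⟨?_, fun v hv => ?_⟩
  · have h1 := h.1
    unfold Matrix.IsHermitian at *
    rw [conjTranspose_smul, h1, star_trivial]
  · simpa [Finsupp.mul_sum, mul_assoc, mul_comm, mul_left_comm] using mul_pos hc (h.2 hv)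

/-- Any global minimizer of the TrAct objective
`F(ΔW) = ‖−η·b·G − ΔW·x‖_F² + λ·b·‖ΔW‖_F²` equals the TrAct update
`−η · G · xᵀ · (x·xᵀ/b + λ·Iₙ)⁻¹`, i.e. the minimizer is unique. -/
theorem tract_global_min_unique
    (n b m : ℕ) (hn : 0 < n) (hb : 0 < b) (hm : 0 < m)
    (x : Matrix (Fin n) (Fin b) ℝ) (G : Matrix (Fin m) (Fin b) ℝ)
    (η lam : ℝ) (hlam : 0 < lam)
    (F : Matrix (Fin m) (Fin n) ℝ → ℝ)
    (hF : ∀ ΔW, F ΔW = frobSq ((-(η * (b : ℝ))) • G - ΔW * x) + lam * (b : ℝ) * frobSq ΔW)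
    (ΔW : Matrix (Fin m) (Fin n) ℝ)
    (hmin : ∀ V : Matrix (Fin m) (Fin n) ℝ, F ΔW ≤ F V) :
    ΔW = (-η) • (G * xᵀ * ((b : ℝ)⁻¹ • (x * xᵀ) + lam • (1 : Matrix (Fin n) (Fin n) ℝ))⁻¹) := by
  have hbR : (0:ℝ) < (b:ℝ) := by exact_mod_cast hb
  set A : Matrix (Fin m) (Fin b) ℝ := (-(η * (b : ℝ))) • G with hA
  -- Step 1: first-order condition in every direction V
  have hlin : ∀ V : Matrix (Fin m) (Fin n) ℝ,
      (-2) * (∑ i, ∑ j, (A - ΔW * x) i j * (V * x) i j)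
        + 2 * (lam * (b:ℝ)) * (∑ i, ∑ j, ΔW i j * V i j) = 0 := by
    intro V
    have hexp : ∀ t : ℝ, F (ΔW + t • V) = F ΔW
        + ((-2) * (∑ i, ∑ j, (A - ΔW * x) i j * (V * x) i j)
            + 2 * (lam * (b:ℝ)) * (∑ i, ∑ j, ΔW i j * V i j)) * t
        + (frobSq (V * x) + lam * (b:ℝ) * frobSq V) * t ^ 2 := by
      intro t
      rw [hF, hF]
      have h1 : A - (ΔW + t • V) * x = (A - ΔW * x) - t • (V * x) := by
        rw [Matrix.add_mul, Matrix.smul_mul]; abel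
      rw [h1, frobSq_sub_smul, frobSq_add_smul]
      ring
    have hq : 0 ≤ frobSq (V * x) + lam * (b:ℝ) * frobSq V := by
      have h1 := frobSq_nonneg (V * x)
      have h2 := frobSq_nonneg V
      have h3 := mul_nonneg (mul_nonneg hlam.le hbR.le) h2
      linarith
    refine coeff_zero hq fun t => ?_
    have := hmin (ΔW + t • V)
    rw [hexp t] at this
    nlinarith
  -- Step 2: normal equation
  have hEq : ΔW * (x * xᵀ) + (lam * (b:ℝ)) • ΔW = A * xᵀ := by
    ext i0 j0
    have h := hlin (Matrix.of fun p q => if p = i0 ∧ q = j0 then (1:ℝ) else 0)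
    have hS2 : (∑ i, ∑ j, ΔW i j *
        (Matrix.of fun p q => if p = i0 ∧ q = j0 then (1:ℝ) else 0) i j) = ΔW i0 j0 := by
      simp [Matrix.of_apply, mul_ite, ite_and]
    have hS1 : (∑ i, ∑ j, (A - ΔW * x) i j *
        ((Matrix.of fun p q => if p = i0 ∧ q = j0 then (1:ℝ) else 0) * x) i j)
        = ((A - ΔW * x) * xᵀ) i0 j0 := by
      have hVx : ∀ i j, ((Matrix.of fun p q => if p = i0 ∧ q = j0 then (1:ℝ) else 0) * x) i j
          = if i = i0 then x j0 j else 0 := by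
        intro i j
        simp [Matrix.mul_apply, Matrix.of_apply, ite_and]
      simp_rw [hVx, Matrix.mul_apply, Matrix.transpose_apply]
      simp [mul_ite, ite_and]
    rw [hS2, hS1] at h
    have h2 : ((A - ΔW * x) * xᵀ) i0 j0 = (A * xᵀ) i0 j0 - (ΔW * (x * xᵀ)) i0 j0 := by
      rw [Matrix.sub_mul, Matrix.mul_assoc]
      simp [Matrix.sub_apply]
    rw [h2] at h
    simp only [Matrix.add_apply, Matrix.smul_apply, smul_eq_mul]
    linarith
  -- Step 3: invertibility of N and conclusion
  set N : Matrix (Fin n) (Fin n) ℝ := (b : ℝ)⁻¹ • (x * xᵀ) + lam • 1 with hNdef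
  have hxxT : (x * xᵀ).PosSemidef := by
    have := Matrix.posSemidef_self_mul_conjTranspose x
    have hx : xᴴ = xᵀ := by ext i j; simp [Matrix.conjTranspose_apply]
    rwa [hx] at this
  have hN : N.PosDef := by
    refine Matrix.PosDef.posSemidef_add (smul_posSemidef hxxT (by positivity)) ?_
    exact smul_posDef Matrix.PosDef.one hlam
  have hdet : IsUnit N.det := (Matrix.isUnit_iff_isUnit_det N).mp hN.isUnit
  have hWN : ΔW * N = (-η) • (G * xᵀ) := by
    rw [hNdef, Matrix.mul_add, Matrix.mul_smul, Matrix.mul_smul, Matrix.mul_one]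
    have hx1 : ΔW * (x * xᵀ) = A * xᵀ - (lam * (b:ℝ)) • ΔW := by
      rw [← hEq]; abel
    rw [hx1, hA, Matrix.smul_mul, smul_sub, smul_smul, smul_smul]
    have e1 : (b:ℝ)⁻¹ * -(η * (b:ℝ)) = -η := by field_simp
    have e2 : (b:ℝ)⁻¹ * (lam * (b:ℝ)) = lam := by field_simp
    rw [e1, e2]
    abel
  have := congrArg (· * N⁻¹) hWN
  rw [Matrix.mul_nonsing_inv_cancel_right N ΔW hdet] at this
  rw [this, Matrix.smul_mul, Matrix.mul_assoc]
end
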